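/- The infinite product over all primes p of (1 − 1/((p−1)²(p+1)))·(1 + 1/(p²−p−1)) converges and equals ζ(2) = π²/6. Equivalently, C · f(0) = ζ(2), where C = ∏_p (1 − 1/((p−1)²(p+1))) and f(0) = ∏_p (1 + 1/(p²−p−1)). -/

import Mathlib

open scoped BigOperators Real

/-- The completely multiplicative function `n ↦ (n²)⁻¹` on `ℕ`. -/
noncomputable def zetaTwoHom : ℕ →*₀ ℝ where
  toFun n := (((n : ℝ)) ^ 2)⁻¹
  map_zero' := by norm_num
  map_one' := by norm_num
  map_mul' m n := by push_cast; rw [mul_pow, mul_inv]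

lemma two_le_coe (p : Nat.Primes) : (2 : ℝ) ≤ ((p : ℕ) : ℝ) := by
  exact_mod_cast p.2.two_le

lemma summable_base : Summable (fun p : Nat.Primes => (((p : ℕ) : ℝ) ^ 2)⁻¹) := by
  have h : Summable (fun n : ℕ => ((n : ℝ) ^ 2)⁻¹) := by
    simpa only [one_div] using hasSum_zeta_two.summable
  exact h.comp_injective Nat.Primes.coe_nat_injective

lemma summable_A : Summable (fun p : Nat.Primes =>
    1 / ((((p : ℕ) : ℝ) - 1) ^ 2 * (((p : ℕ) : ℝ) + 1))) := by
  refine Summable.of_nonneg_of_le (fun p => ?_) (fun p => ?_) (summable_base.mul_left 4)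
  · have h := two_le_coe p
    positivity
  · have h := two_le_coe p
    rw [show (4:ℝ) * ((((p:ℕ):ℝ))^2)⁻¹ = 4 / ((p:ℕ):ℝ)^2 by ring,
      div_le_div_iff₀ (by nlinarith) (by positivity)]
    nlinarith [sq_nonneg (((p:ℕ):ℝ) - 2)]

lemma summable_B : Summable (fun p : Nat.Primes =>
    1 / (((p : ℕ) : ℝ) ^ 2 - ((p : ℕ) : ℝ) - 1)) := by
  refine Summable.of_nonneg_of_le (fun p => ?_) (fun p => ?_) (summable_base.mul_left 4)
  · have h := two_le_coe p
    have : (0:ℝ) < ((p:ℕ):ℝ) ^ 2 - ((p:ℕ):ℝ) - 1 := by nlinarith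
    positivity
  · have h := two_le_coe p
    have h1 : (0:ℝ) < ((p:ℕ):ℝ) ^ 2 - ((p:ℕ):ℝ) - 1 := by nlinarith
    rw [show (4:ℝ) * ((((p:ℕ):ℝ))^2)⁻¹ = 4 / ((p:ℕ):ℝ)^2 by ring,
      div_le_div_iff₀ h1 (by positivity)]
    nlinarith


lemma A_pos (p : Nat.Primes) :
    0 < 1 - 1 / ((((p : ℕ) : ℝ) - 1) ^ 2 * (((p : ℕ) : ℝ) + 1)) := by
  have h := two_le_coe p
  have hd : (3:ℝ) ≤ (((p:ℕ):ℝ) - 1) ^ 2 * (((p:ℕ):ℝ) + 1) := by nlinarith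
  have : 1 / ((((p:ℕ):ℝ) - 1) ^ 2 * (((p:ℕ):ℝ) + 1)) < 1 := by
    rw [div_lt_one (by linarith)]; linarith
  linarith

lemma B_pos (p : Nat.Primes) :
    0 < 1 + 1 / (((p : ℕ) : ℝ) ^ 2 - ((p : ℕ) : ℝ) - 1) := by
  have h := two_le_coe p
  have h1 : (0:ℝ) < ((p:ℕ):ℝ) ^ 2 - ((p:ℕ):ℝ) - 1 := by nlinarith
  positivity

lemma summable_logA : Summable (fun p : Nat.Primes =>
    Real.log (1 - 1 / ((((p : ℕ) : ℝ) - 1) ^ 2 * (((p : ℕ) : ℝ) + 1)))) := by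
  refine Summable.of_norm_bounded (summable_A.mul_left (3/2)) (fun p => ?_)
  set x : ℝ := ((p:ℕ):ℝ) with hx
  have h := two_le_coe p
  have hd : (3:ℝ) ≤ (x - 1) ^ 2 * (x + 1) := by nlinarith
  set t : ℝ := 1 / ((x - 1) ^ 2 * (x + 1)) with ht
  have htpos : 0 < t := by positivity
  have ht3 : t ≤ 1/3 := by
    rw [ht, div_le_div_iff₀ (by linarith) (by norm_num)]; linarith
  set A : ℝ := 1 - t with hA
  have hApos : (0:ℝ) < A := by rw [hA]; linarith
  have hlogle : Real.log A ≤ 0 := Real.log_nonpos hApos.le (by rw [hA]; linarith)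
  rw [Real.norm_eq_abs, abs_of_nonpos hlogle]
  have h2 : -Real.log A = Real.log A⁻¹ := (Real.log_inv A).symm
  have h3 : Real.log A⁻¹ ≤ A⁻¹ - 1 := Real.log_le_sub_one_of_pos (by positivity)
  have hinv : A * A⁻¹ = 1 := mul_inv_cancel₀ hApos.ne'
  have hinvle : A⁻¹ ≤ 3/2 := by
    rw [inv_le_comm₀ hApos (by norm_num)]; rw [hA]; linarith
  have h4 : A⁻¹ - 1 ≤ (3/2) * t := by nlinarith
  rw [h2]
  linarith

lemma summable_logB : Summable (fun p : Nat.Primes =>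
    Real.log (1 + 1 / (((p : ℕ) : ℝ) ^ 2 - ((p : ℕ) : ℝ) - 1))) := by
  refine Summable.of_norm_bounded summable_B (fun p => ?_)
  have h := two_le_coe p
  have h1 : (0:ℝ) < ((p:ℕ):ℝ) ^ 2 - ((p:ℕ):ℝ) - 1 := by nlinarith
  have hs : (0:ℝ) ≤ 1 / (((p:ℕ):ℝ) ^ 2 - ((p:ℕ):ℝ) - 1) := by positivity
  have hlog0 : 0 ≤ Real.log (1 + 1 / (((p:ℕ):ℝ) ^ 2 - ((p:ℕ):ℝ) - 1)) :=
    Real.log_nonneg (by linarith)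
  rw [Real.norm_eq_abs, abs_of_nonneg hlog0]
  have := Real.log_le_sub_one_of_pos (x := 1 + 1 / (((p:ℕ):ℝ) ^ 2 - ((p:ℕ):ℝ) - 1))
    (by linarith)
  linarith

lemma multipliable_A : Multipliable (fun p : Nat.Primes =>
    1 - 1 / ((((p : ℕ) : ℝ) - 1) ^ 2 * (((p : ℕ) : ℝ) + 1))) := by
  exact Real.multipliable_of_summable_log (fun p => A_pos p) summable_logA

lemma multipliable_B : Multipliable (fun p : Nat.Primes =>
    1 + 1 / (((p : ℕ) : ℝ) ^ 2 - ((p : ℕ) : ℝ) - 1)) := by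
  exact Real.multipliable_of_summable_log (fun p => B_pos p) summable_logB

lemma hasProd_main : HasProd (fun p : Nat.Primes => (1 - zetaTwoHom (p:ℕ))⁻¹) (π ^ 2 / 6) := by
  have hsum : Summable (fun n : ℕ => ‖zetaTwoHom n‖) := by
    have h : Summable (fun n : ℕ => ((n : ℝ) ^ 2)⁻¹) := by
      simpa only [one_div] using hasSum_zeta_two.summable
    refine h.congr (fun n => ?_)
    simp only [zetaTwoHom, MonoidWithZeroHom.coe_mk, ZeroHom.coe_mk, Real.norm_eq_abs]
    rw [abs_of_nonneg (by positivity)]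
  have h := EulerProduct.eulerProduct_completely_multiplicative_hasProd hsum
  have hts : ∑' n : ℕ, zetaTwoHom n = π ^ 2 / 6 := by
    have := hasSum_zeta_two.tsum_eq
    simp only [one_div] at this
    simpa only [zetaTwoHom, MonoidWithZeroHom.coe_mk, ZeroHom.coe_mk] using this
  rwa [hts] at h

lemma term_eq (p : Nat.Primes) :
    (1 - zetaTwoHom (p:ℕ))⁻¹ =
      (1 - 1 / ((((p : ℕ) : ℝ) - 1) ^ 2 * (((p : ℕ) : ℝ) + 1))) *
        (1 + 1 / (((p : ℕ) : ℝ) ^ 2 - ((p : ℕ) : ℝ) - 1)) := by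
  set x : ℝ := ((p:ℕ):ℝ) with hx
  have h : (2:ℝ) ≤ x := two_le_coe p
  have hA : ((x - 1) ^ 2 * (x + 1)) ≠ 0 := by nlinarith
  have hB : (x ^ 2 - x - 1) ≠ 0 := by nlinarith
  have hx2 : x ^ 2 ≠ 0 := by positivity
  have hx21 : x ^ 2 - 1 ≠ 0 := by nlinarith
  have h1 : 1 - zetaTwoHom (p:ℕ) = (x ^ 2 - 1) / x ^ 2 := by
    simp only [zetaTwoHom, MonoidWithZeroHom.coe_mk, ZeroHom.coe_mk, ← hx]
    field_simp
  rw [h1, inv_div]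
  rw [one_sub_div hA, one_add_div hB, div_mul_div_comm, div_eq_div_iff hx21 (mul_ne_zero hA hB)]
  ring

/-- The infinite product over all primes of `(1 - 1/((p-1)²(p+1)))(1 + 1/(p²-p-1))` converges
and equals `ζ(2) = π²/6`; equivalently `C·f(0) = ζ(2)` where `C = ∏_p (1 - 1/((p-1)²(p+1)))`
and `f(0) = ∏_p (1 + 1/(p²-p-1))`. -/
theorem prod_C_mul_f_zero_eq_zeta_two :
    Multipliable (fun p : Nat.Primes =>
      (1 - 1 / ((((p : ℕ) : ℝ) - 1) ^ 2 * (((p : ℕ) : ℝ) + 1))) *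
        (1 + 1 / (((p : ℕ) : ℝ) ^ 2 - ((p : ℕ) : ℝ) - 1))) ∧
    (∏' p : Nat.Primes,
      (1 - 1 / ((((p : ℕ) : ℝ) - 1) ^ 2 * (((p : ℕ) : ℝ) + 1))) *
        (1 + 1 / (((p : ℕ) : ℝ) ^ 2 - ((p : ℕ) : ℝ) - 1))) = π ^ 2 / 6 ∧
    (∏' p : Nat.Primes, (1 - 1 / ((((p : ℕ) : ℝ) - 1) ^ 2 * (((p : ℕ) : ℝ) + 1)))) *
      (∏' p : Nat.Primes, (1 + 1 / (((p : ℕ) : ℝ) ^ 2 - ((p : ℕ) : ℝ) - 1))) = π ^ 2 / 6 := by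
  have hmain : HasProd (fun p : Nat.Primes =>
      (1 - 1 / ((((p : ℕ) : ℝ) - 1) ^ 2 * (((p : ℕ) : ℝ) + 1))) *
        (1 + 1 / (((p : ℕ) : ℝ) ^ 2 - ((p : ℕ) : ℝ) - 1))) (π ^ 2 / 6) := by
    have := hasProd_main
    rwa [funext term_eq] at this
  refine ⟨hmain.multipliable, hmain.tprod_eq, ?_⟩
  rw [← Multipliable.tprod_mul multipliable_A multipliable_B]
  exact hmain.tprod_eq
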